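/- Let π be a unitary representation of a discrete group Γ on a Hilbert space K, K^π the space of π-invariant vectors, and p_π the orthogonal projection onto K^π. Then π fails to have a spectral gap if and only if there exists a state ψ on L(K) with ψ(π_t) = 1 for every t ∈ Γ and ψ(p_π) = 0. -/

import Mathlib

open ComplexOrder

/-- `π` has a spectral gap: there is no net (equivalently, ε-F family) of almost-invariant
unit vectors orthogonal to the space `K^π` of `π`-invariant vectors. -/
def HasSpectralGap {Γ : Type*} [Group Γ]
    {K : Type*} [NormedAddCommGroup K] [InnerProductSpace ℂ K] [CompleteSpace K]
    (π : Γ →* unitary (K →L[ℂ] K)) : Prop :=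
  ¬ (∀ ε > (0 : ℝ), ∀ F : Finset Γ, ∃ ξ : K, ‖ξ‖ = 1 ∧
      (∀ η : K, (∀ t : Γ, (π t : K →L[ℂ] K) η = η) → (inner ℂ ξ η : ℂ) = 0) ∧
      ∀ t ∈ F, ‖(π t : K →L[ℂ] K) ξ - ξ‖ < ε)

private lemma psi_nonneg {K : Type*} [NormedAddCommGroup K] [InnerProductSpace ℂ K]
    [CompleteSpace K] (ψ : (K →L[ℂ] K) →ₗ[ℂ] ℂ)
    (hψ : ∀ x : K →L[ℂ] K, 0 ≤ ψ (star x * x)) {a : K →L[ℂ] K} (ha : 0 ≤ a) :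
    0 ≤ ψ a := by
  rw [StarOrderedRing.nonneg_iff] at ha
  induction ha using AddSubmonoid.closure_induction with
  | mem x hx => obtain ⟨s, rfl⟩ := hx; exact hψ s
  | zero => simp
  | add x y _ _ hx hy => rw [map_add]; exact add_nonneg hx hy

/-- `π` fails to have a spectral gap if and only if there is a state `ψ` on
`L(K)` with `ψ (π t) = 1` for every `t ∈ Γ` and `ψ p_π = 0`, where `p_π` is the orthogonal
projection onto the invariant vectors (characterised as the self-adjoint idempotent whose
fixed vectors are exactly the `π`-invariant vectors). -/
theorem not_hasSpectralGap_iff_exists_state_vanishing_on_proj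
    {Γ : Type*} [Group Γ]
    {K : Type*} [NormedAddCommGroup K] [InnerProductSpace ℂ K] [CompleteSpace K]
    (π : Γ →* unitary (K →L[ℂ] K))
    (p : K →L[ℂ] K) (hsa : IsSelfAdjoint p) (hidem : p * p = p)
    (hfix : ∀ ξ : K, p ξ = ξ ↔ ∀ t : Γ, (π t : K →L[ℂ] K) ξ = ξ) :
    ¬ HasSpectralGap π ↔
      ∃ ψ : (K →L[ℂ] K) →ₗ[ℂ] ℂ,
        (∀ x : K →L[ℂ] K, 0 ≤ ψ (star x * x)) ∧ ψ 1 = 1 ∧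
        (∀ t : Γ, ψ (π t : K →L[ℂ] K) = 1) ∧ ψ p = 0 := by
  classical
  have hpinv : ∀ ζ : K, p (p ζ) = p ζ := by
    intro ζ
    have := congrArg (fun q : K →L[ℂ] K => q ζ) hidem
    simpa [ContinuousLinearMap.mul_apply] using this
  have hsym : ∀ v w : K, (inner ℂ (p v) w : ℂ) = inner ℂ v (p w) :=
    (ContinuousLinearMap.isSelfAdjoint_iff_isSymmetric.mp hsa)
  constructor
  · -- forward direction
    intro h
    unfold HasSpectralGap at h
    rw [not_not] at h
    have hpos' : ∀ n : ℕ, (0:ℝ) < 1 / (n + 1) := fun n => by positivity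
    have hchoice : ∀ i : ℕ × Finset Γ, ∃ ξ : K, ‖ξ‖ = 1 ∧
        (∀ η : K, (∀ t : Γ, (π t : K →L[ℂ] K) η = η) → (inner ℂ ξ η : ℂ) = 0) ∧
        ∀ t ∈ i.2, ‖(π t : K →L[ℂ] K) ξ - ξ‖ < 1 / (i.1 + 1) :=
      fun i => h _ (hpos' i.1) i.2
    choose ξ hξ1 hξ2 hξ3 using hchoice
    set U : Ultrafilter (ℕ × Finset Γ) := Ultrafilter.of Filter.atTop with hU
    have hUle : (U : Filter (ℕ × Finset Γ)) ≤ Filter.atTop := Ultrafilter.of_le _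
    set f : (K →L[ℂ] K) → (ℕ × Finset Γ) → ℂ := fun x i => inner ℂ (ξ i) (x (ξ i)) with hf
    have hmem : ∀ (x : K →L[ℂ] K) i, f x i ∈ Metric.closedBall (0:ℂ) ‖x‖ := by
      intro x i
      rw [Metric.mem_closedBall, dist_zero_right]
      calc ‖f x i‖ ≤ ‖ξ i‖ * ‖x (ξ i)‖ := norm_inner_le_norm _ _
        _ ≤ ‖ξ i‖ * (‖x‖ * ‖ξ i‖) := by gcongr; exact x.le_opNorm _
        _ = ‖x‖ := by rw [hξ1]; ring
    have hlim : ∀ x : K →L[ℂ] K, ∃ c, Filter.Tendsto (f x) U (nhds c) := by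
      intro x
      obtain ⟨c, -, hc⟩ := (isCompact_closedBall (0:ℂ) ‖x‖).ultrafilter_le_nhds
        (U.map (f x)) (by
          rw [Ultrafilter.coe_map]
          exact Filter.le_principal_iff.2 (Filter.mem_map.2
            (Filter.univ_mem' (fun i => hmem x i))))
      exact ⟨c, hc⟩
    choose L hL using hlim
    have hadd : ∀ x y : K →L[ℂ] K, L (x + y) = L x + L y := by
      intro x y
      refine tendsto_nhds_unique (hL _) ?_
      have hfe : f (x + y) = fun i => f x i + f y i := by
        funext i
        simp only [hf, ContinuousLinearMap.add_apply, inner_add_right]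
      rw [hfe]; exact (hL x).add (hL y)
    have hsmul : ∀ (c : ℂ) (x : K →L[ℂ] K), L (c • x) = c * L x := by
      intro c x
      refine tendsto_nhds_unique (hL _) ?_
      have hfe : f (c • x) = fun i => c * f x i := by
        funext i
        simp only [hf, ContinuousLinearMap.smul_apply, inner_smul_right]
      rw [hfe]; exact (hL x).const_mul c
    refine ⟨{ toFun := L, map_add' := hadd, map_smul' := hsmul }, ?_, ?_, ?_, ?_⟩
    · -- positivity
      intro x
      show 0 ≤ L (star x * x)
      have hre : ∀ i, f (star x * x) i = ((‖x (ξ i)‖^2 : ℝ) : ℂ) := by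
        intro i
        simp only [hf, ContinuousLinearMap.mul_apply]
        rw [ContinuousLinearMap.star_eq_adjoint, ContinuousLinearMap.adjoint_inner_right,
          inner_self_eq_norm_sq_to_K]
        norm_num
      have him : (L (star x * x)).im = 0 := by
        have h1 : Filter.Tendsto (fun i => (f (star x * x) i).im) U
            (nhds (L (star x * x)).im) := (Complex.continuous_im.tendsto _).comp (hL _)
        have h2 : (fun i => (f (star x * x) i).im) = fun _ => (0:ℝ) := by
          funext i; rw [hre i]; exact Complex.ofReal_im _
        rw [h2] at h1
        exact tendsto_nhds_unique h1 tendsto_const_nhds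
      have hre' : 0 ≤ (L (star x * x)).re := by
        have h1 : Filter.Tendsto (fun i => (f (star x * x) i).re) U
            (nhds (L (star x * x)).re) := (Complex.continuous_re.tendsto _).comp (hL _)
        refine ge_of_tendsto' h1 (fun i => ?_)
        rw [hre i]
        simp only [Complex.ofReal_re]
        positivity
      rw [Complex.le_def]
      exact ⟨by simpa using hre', by simp [him]⟩
    · -- ψ 1 = 1
      show L 1 = 1
      refine tendsto_nhds_unique (hL 1) ?_
      have hfe : f 1 = fun _ => (1:ℂ) := by
        funext i
        simp only [hf, ContinuousLinearMap.one_apply]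
        rw [inner_self_eq_norm_sq_to_K, hξ1]; norm_num
      rw [hfe]; exact tendsto_const_nhds
    · -- ψ (π t) = 1
      intro t
      show L (π t : K →L[ℂ] K) = 1
      refine tendsto_nhds_unique (hL _) ?_
      have key : Filter.Tendsto (f (π t : K →L[ℂ] K)) Filter.atTop (nhds 1) := by
        rw [Metric.tendsto_atTop]
        intro δ hδ
        obtain ⟨n₀, hn₀⟩ := exists_nat_one_div_lt hδ
        refine ⟨(n₀, {t}), fun i hi => ?_⟩
        have ht : t ∈ i.2 := hi.2 (Finset.mem_singleton_self t)
        have hn : (n₀:ℝ) + 1 ≤ (i.1:ℝ) + 1 := by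
          have : (n₀:ℝ) ≤ i.1 := by exact_mod_cast hi.1
          linarith
        have hlt : ‖(π t : K →L[ℂ] K) (ξ i) - ξ i‖ < 1 / ((i.1:ℝ) + 1) := hξ3 i t ht
        have h1 : dist (f (π t : K →L[ℂ] K) i) 1 ≤ ‖(π t : K →L[ℂ] K) (ξ i) - ξ i‖ := by
          rw [dist_eq_norm]
          have h2 : f (π t : K →L[ℂ] K) i - 1
              = inner ℂ (ξ i) ((π t : K →L[ℂ] K) (ξ i) - ξ i) := by
            rw [inner_sub_right]
            simp only [hf]
            rw [inner_self_eq_norm_sq_to_K, hξ1]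
            norm_num
          rw [h2]
          calc ‖(inner ℂ (ξ i) ((π t : K →L[ℂ] K) (ξ i) - ξ i) : ℂ)‖
              ≤ ‖ξ i‖ * ‖(π t : K →L[ℂ] K) (ξ i) - ξ i‖ := norm_inner_le_norm _ _
            _ = ‖(π t : K →L[ℂ] K) (ξ i) - ξ i‖ := by rw [hξ1, one_mul]
        calc dist (f (π t : K →L[ℂ] K) i) 1
            ≤ ‖(π t : K →L[ℂ] K) (ξ i) - ξ i‖ := h1
          _ < 1 / ((i.1:ℝ) + 1) := hlt
          _ ≤ 1 / ((n₀:ℝ) + 1) := by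
              apply one_div_le_one_div_of_le
              · positivity
              · exact hn
          _ < δ := hn₀
      exact key.mono_left hUle
    · -- ψ p = 0
      show L p = 0
      refine tendsto_nhds_unique (hL p) ?_
      have hfe : f p = fun _ => (0:ℂ) := by
        funext i
        simp only [hf]
        exact hξ2 i (p (ξ i)) ((hfix (p (ξ i))).mp (hpinv (ξ i)))
      rw [hfe]; exact tendsto_const_nhds
  · -- backward direction
    rintro ⟨ψ, hψpos, hψ1, hψπ, hψp⟩ hgap
    unfold HasSpectralGap at hgap
    push_neg at hgap
    obtain ⟨ε, hε, F, hF⟩ := hgap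
    have hstar_u : ∀ t : Γ, star (π t : K →L[ℂ] K) = ((π t⁻¹ : unitary (K →L[ℂ] K)) : K →L[ℂ] K) := by
      intro t
      rw [← Unitary.coe_star, Unitary.star_eq_inv, ← map_inv]
    have hunit : ∀ t : Γ, star (π t : K →L[ℂ] K) * (π t : K →L[ℂ] K) = 1 := by
      intro t
      rw [← Unitary.coe_star]
      exact Unitary.coe_star_mul_self (π t)
    have hinv : ∀ (ζ : K) (t : Γ), (π t : K →L[ℂ] K) (p ζ) = p ζ :=
      fun ζ t => (hfix (p ζ)).mp (hpinv ζ) t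
    have hker : ∀ ζ : K, p (ζ - p ζ) = 0 := by
      intro ζ; rw [map_sub, hpinv, sub_self]
    set a : K →L[ℂ] K :=
      (∑ t ∈ F, (star (π t : K →L[ℂ] K) - 1) * ((π t : K →L[ℂ] K) - 1))
        - ((ε^2 : ℝ) : ℂ) • (1 - p) with ha
    have hquad : ∀ ζ : K, (inner ℂ (a ζ) ζ : ℂ)
        = ((∑ t ∈ F, ‖(π t : K →L[ℂ] K) (ζ - p ζ) - (ζ - p ζ)‖^2
            - ε^2 * ‖ζ - p ζ‖^2 : ℝ) : ℂ) := by
      intro ζ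
      have hterm : ∀ t : Γ,
          (inner ℂ (((star (π t : K →L[ℂ] K) - 1) * ((π t : K →L[ℂ] K) - 1)) ζ) ζ : ℂ)
          = ((‖(π t : K →L[ℂ] K) (ζ - p ζ) - (ζ - p ζ)‖^2 : ℝ) : ℂ) := by
        intro t
        have h1 : ((star (π t : K →L[ℂ] K) - 1) * ((π t : K →L[ℂ] K) - 1)) ζ
            = star ((π t : K →L[ℂ] K) - 1) (((π t : K →L[ℂ] K) - 1) ζ) := by
          rw [star_sub, star_one, ContinuousLinearMap.mul_apply]
        rw [h1, ContinuousLinearMap.star_eq_adjoint, ContinuousLinearMap.adjoint_inner_left,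
          inner_self_eq_norm_sq_to_K]
        have h2 : ((π t : K →L[ℂ] K) - 1) ζ
            = (π t : K →L[ℂ] K) (ζ - p ζ) - (ζ - p ζ) := by
          simp only [ContinuousLinearMap.sub_apply, ContinuousLinearMap.one_apply, map_sub,
            hinv ζ t]
          abel
        rw [h2]
        norm_num
      have hproj : (inner ℂ ((1 - p : K →L[ℂ] K) ζ) ζ : ℂ) = ((‖ζ - p ζ‖^2 : ℝ) : ℂ) := by
        have h3 : ((1 - p : K →L[ℂ] K)) ζ = ζ - p ζ := by
          simp [ContinuousLinearMap.sub_apply]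
        rw [h3]
        have h5 : (inner ℂ (ζ - p ζ) (p ζ) : ℂ) = 0 := by
          rw [← hsym, hker, inner_zero_left]
        have h4 : (inner ℂ (ζ - p ζ) (ζ - p ζ) : ℂ) = inner ℂ (ζ - p ζ) ζ := by
          rw [inner_sub_right, h5, sub_zero]
        rw [← h4, inner_self_eq_norm_sq_to_K]
        norm_num
      rw [ha, ContinuousLinearMap.sub_apply, inner_sub_left, ContinuousLinearMap.smul_apply,
        inner_smul_left, ContinuousLinearMap.sum_apply, sum_inner, hproj,
        Finset.sum_congr rfl (fun t _ => hterm t), Complex.conj_ofReal]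
      push_cast
      ring
    have hsa_a : IsSelfAdjoint a := by
      rw [IsSelfAdjoint, ha, star_sub, star_smul, star_sub, star_one, hsa.star_eq,
        Complex.star_def, Complex.conj_ofReal]
      congr 1
      rw [star_sum]
      refine Finset.sum_congr rfl (fun t _ => ?_)
      rw [star_mul, star_sub, star_sub, star_one, star_star]
    have hpos_a : (0 : K →L[ℂ] K) ≤ a := by
      rw [ContinuousLinearMap.nonneg_iff_isPositive, ContinuousLinearMap.isPositive_def']
      refine ⟨hsa_a, fun ζ => ?_⟩
      have hval : a.reApplyInnerSelf ζ
          = ∑ t ∈ F, ‖(π t : K →L[ℂ] K) (ζ - p ζ) - (ζ - p ζ)‖^2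
            - ε^2 * ‖ζ - p ζ‖^2 := by
        rw [ContinuousLinearMap.reApplyInnerSelf_apply, hquad ζ]
        simp only [RCLike.re_to_complex, Complex.ofReal_re]
      rw [hval]
      by_cases hr : ζ - p ζ = 0
      · simp [hr]
      · have hrpos : 0 < ‖ζ - p ζ‖ := norm_pos_iff.mpr hr
        set r : K := ζ - p ζ with hrdef
        set η : K := ((‖r‖⁻¹ : ℝ) : ℂ) • r with hη
        have hnη : ‖η‖ = 1 := by
          rw [hη, norm_smul, Complex.norm_real, norm_inv, norm_norm,
            inv_mul_cancel₀ (ne_of_gt hrpos)]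
        have horth : ∀ ζ' : K, (∀ t : Γ, (π t : K →L[ℂ] K) ζ' = ζ') →
            (inner ℂ η ζ' : ℂ) = 0 := by
          intro ζ' hζ'
          rw [hη, inner_smul_left]
          have hz : (inner ℂ r ζ' : ℂ) = 0 := by
            have hpζ' : p ζ' = ζ' := (hfix ζ').mpr hζ'
            rw [← hpζ', ← hsym, hrdef, hker, inner_zero_left]
          rw [hz, mul_zero]
        obtain ⟨t, htF, hεt⟩ := hF η hnη horth
        have hscale : ‖(π t : K →L[ℂ] K) r - r‖ = ‖r‖ * ‖(π t : K →L[ℂ] K) η - η‖ := by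
          rw [hη, map_smul, ← smul_sub, norm_smul, Complex.norm_real, norm_inv, norm_norm]
          field_simp
        have hone : ε * ‖r‖ ≤ ‖(π t : K →L[ℂ] K) r - r‖ := by
          rw [hscale, mul_comm ε ‖r‖]
          exact mul_le_mul_of_nonneg_left hεt (norm_nonneg r)
        have hsum : ‖(π t : K →L[ℂ] K) r - r‖^2
            ≤ ∑ s ∈ F, ‖(π s : K →L[ℂ] K) r - r‖^2 :=
          Finset.single_le_sum (f := fun s => ‖((π s : K →L[ℂ] K)) r - r‖^2)
            (fun s _ => sq_nonneg _) htF
        have hsq : ε^2 * ‖r‖^2 ≤ ‖(π t : K →L[ℂ] K) r - r‖^2 := by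
          rw [← mul_pow]
          exact pow_le_pow_left₀ (by positivity) hone 2
        linarith
    have hψa : ψ a = -((ε^2 : ℝ) : ℂ) := by
      have hterm : ∀ t ∈ F,
          ψ ((star (π t : K →L[ℂ] K) - 1) * ((π t : K →L[ℂ] K) - 1)) = 0 := by
        intro t _
        have hexp : (star (π t : K →L[ℂ] K) - 1) * ((π t : K →L[ℂ] K) - 1)
            = (1 - star (π t : K →L[ℂ] K)) - ((π t : K →L[ℂ] K) - 1) := by
          rw [sub_mul, one_mul, mul_sub, mul_one, hunit t]
        rw [hexp, map_sub, map_sub, map_sub, hψ1, hstar_u t, hψπ t⁻¹, hψπ t]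
        ring
      rw [ha, map_sub, map_smul, map_sum, Finset.sum_eq_zero hterm, map_sub, hψ1, hψp,
        smul_eq_mul]
      ring
    have h0 : (0:ℂ) ≤ -((ε^2 : ℝ) : ℂ) := by
      have := psi_nonneg ψ hψpos hpos_a
      rwa [hψa] at this
    have h1 : (0:ℝ) ≤ -(ε^2) := by
      have h2 := (Complex.le_def.mp h0).1
      simpa only [Complex.zero_re, Complex.neg_re, Complex.ofReal_re] using h2
    nlinarith
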